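/- Let E be the path algebra over C of the quiver with two vertices and arrows a₁, a₂ from vertex 1 to vertex 2 and b₁, b₂ from vertex 2 to vertex 1, modulo the relations a_i b_j = 0 = b_j a_i for i ≠ j, a₁b₁ = a₂b₂, and b₁a₁ = b₂a₂. Then E is a finite-dimensional algebra whose Cartan matrix is [[2,2],[2,2]], which has rank one; consequently dim_C Z(E) combined with the rank-one Cartan matrix gives dim of the projective (Higman) center of E equal to 1. -/

import Mathlib

open scoped Matrix

/-- Generators of the path algebra: `0 ↦ e₁, 1 ↦ e₂` (vertex idempotents),
`2 ↦ a₁, 3 ↦ a₂` (arrows `1 → 2`), `4 ↦ b₁, 5 ↦ b₂` (arrows `2 → 1`). -/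
noncomputable def gen (i : Fin 6) : FreeAlgebra ℂ (Fin 6) := FreeAlgebra.ι ℂ i

/-- The relations of the quiver algebra: path-algebra relations for the quiver with two
vertices, arrows `a₁, a₂ : 1 → 2` and `b₁, b₂ : 2 → 1`, together with the admissible
relations `aᵢ bⱼ = 0 = bⱼ aᵢ (i ≠ j)`, `a₁ b₁ = a₂ b₂`, `b₁ a₁ = b₂ a₂`. -/
inductive quiverRel : FreeAlgebra ℂ (Fin 6) → FreeAlgebra ℂ (Fin 6) → Prop
  | unit : quiverRel (gen 0 + gen 1) 1
  | idem1 : quiverRel (gen 0 * gen 0) (gen 0)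
  | idem2 : quiverRel (gen 1 * gen 1) (gen 1)
  | orth1 : quiverRel (gen 0 * gen 1) 0
  | orth2 : quiverRel (gen 1 * gen 0) 0
  | pathA1l : quiverRel (gen 1 * gen 2) (gen 2)
  | pathA1r : quiverRel (gen 2 * gen 0) (gen 2)
  | pathA2l : quiverRel (gen 1 * gen 3) (gen 3)
  | pathA2r : quiverRel (gen 3 * gen 0) (gen 3)
  | pathB1l : quiverRel (gen 0 * gen 4) (gen 4)
  | pathB1r : quiverRel (gen 4 * gen 1) (gen 4)
  | pathB2l : quiverRel (gen 0 * gen 5) (gen 5)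
  | pathB2r : quiverRel (gen 5 * gen 1) (gen 5)
  | ab12 : quiverRel (gen 2 * gen 5) 0
  | ab21 : quiverRel (gen 3 * gen 4) 0
  | ba12 : quiverRel (gen 4 * gen 3) 0
  | ba21 : quiverRel (gen 5 * gen 2) 0
  | abEq : quiverRel (gen 2 * gen 4) (gen 3 * gen 5)
  | baEq : quiverRel (gen 4 * gen 2) (gen 5 * gen 3)

/-- The quiver algebra `E`, Morita equivalent to a regular block of `u_q(sl₂)`. -/
noncomputable def quiverAlgE : Type := RingQuot quiverRel

noncomputable instance : Ring quiverAlgE := inferInstanceAs (Ring (RingQuot quiverRel))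
noncomputable instance : Algebra ℂ quiverAlgE := inferInstanceAs (Algebra ℂ (RingQuot quiverRel))


/-! ### An explicit 8-dimensional model of the quiver algebra -/

noncomputable section StatementFourteen

def QA : Type := Fin 8 → ℂ
instance : AddCommGroup QA := inferInstanceAs (AddCommGroup (Fin 8 → ℂ))
instance : Module ℂ QA := inferInstanceAs (Module ℂ (Fin 8 → ℂ))

def bv (k : Fin 8) : QA := fun j => if j = k then 1 else 0

def qmul (x y : QA) : QA := fun i =>
  if i = 0 then x 0 * y 0 else
  if i = 1 then x 1 * y 1 else
  if i = 2 then x 1 * y 2 + x 2 * y 0 else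
  if i = 3 then x 1 * y 3 + x 3 * y 0 else
  if i = 4 then x 0 * y 4 + x 4 * y 1 else
  if i = 5 then x 0 * y 5 + x 5 * y 1 else
  if i = 6 then x 0 * y 6 + x 6 * y 0 + x 4 * y 2 + x 5 * y 3 else
  x 1 * y 7 + x 7 * y 1 + x 2 * y 4 + x 3 * y 5

def qone : QA := fun i => if i = 0 then 1 else if i = 1 then 1 else 0

namespace QA

lemma eqOf (x y : QA) (h0 : x 0 = y 0) (h1 : x 1 = y 1) (h2 : x 2 = y 2)
    (h3 : x 3 = y 3) (h4 : x 4 = y 4) (h5 : x 5 = y 5) (h6 : x 6 = y 6)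
    (h7 : x 7 = y 7) : x = y := by
  funext i; fin_cases i; exacts [h0, h1, h2, h3, h4, h5, h6, h7]

lemma qmul0 (x y : QA) : (qmul x y) 0 = x 0 * y 0 := rfl
lemma qmul1 (x y : QA) : (qmul x y) 1 = x 1 * y 1 := rfl
lemma qmul2 (x y : QA) : (qmul x y) 2 = x 1 * y 2 + x 2 * y 0 := rfl
lemma qmul3 (x y : QA) : (qmul x y) 3 = x 1 * y 3 + x 3 * y 0 := rfl
lemma qmul4 (x y : QA) : (qmul x y) 4 = x 0 * y 4 + x 4 * y 1 := rfl
lemma qmul5 (x y : QA) : (qmul x y) 5 = x 0 * y 5 + x 5 * y 1 := rfl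
lemma qmul6 (x y : QA) : (qmul x y) 6 = x 0 * y 6 + x 6 * y 0 + x 4 * y 2 + x 5 * y 3 := rfl
lemma qmul7 (x y : QA) : (qmul x y) 7 = x 1 * y 7 + x 7 * y 1 + x 2 * y 4 + x 3 * y 5 := rfl

lemma zeroc (k : Fin 8) : (0 : QA) k = 0 := rfl
lemma addc (x y : QA) (k : Fin 8) : (x + y) k = x k + y k := rfl
lemma smulc (a : ℂ) (x : QA) (k : Fin 8) : (a • x) k = a * x k := rfl
lemma onec0 : qone 0 = 1 := rfl
lemma onec1 : qone 1 = 1 := rfl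
lemma onec2 : qone 2 = 0 := rfl
lemma onec3 : qone 3 = 0 := rfl
lemma onec4 : qone 4 = 0 := rfl
lemma onec5 : qone 5 = 0 := rfl
lemma onec6 : qone 6 = 0 := rfl
lemma onec7 : qone 7 = 0 := rfl

instance instRing : Ring QA :=
  { (inferInstance : AddCommGroup QA) with
    mul := qmul
    one := qone
    mul_assoc := fun x y z => by
      show qmul (qmul x y) z = qmul x (qmul y z)
      refine eqOf _ _ ?_ ?_ ?_ ?_ ?_ ?_ ?_ ?_ <;>
        simp only [qmul0, qmul1, qmul2, qmul3, qmul4, qmul5, qmul6, qmul7] <;> ring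
    one_mul := fun x => by
      show qmul qone x = x
      refine eqOf _ _ ?_ ?_ ?_ ?_ ?_ ?_ ?_ ?_ <;>
        simp only [qmul0, qmul1, qmul2, qmul3, qmul4, qmul5, qmul6, qmul7,
          onec0, onec1, onec2, onec3, onec4, onec5, onec6, onec7] <;> ring
    mul_one := fun x => by
      show qmul x qone = x
      refine eqOf _ _ ?_ ?_ ?_ ?_ ?_ ?_ ?_ ?_ <;>
        simp only [qmul0, qmul1, qmul2, qmul3, qmul4, qmul5, qmul6, qmul7,
          onec0, onec1, onec2, onec3, onec4, onec5, onec6, onec7] <;> ring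
    left_distrib := fun x y z => by
      show qmul x (y + z) = qmul x y + qmul x z
      refine eqOf _ _ ?_ ?_ ?_ ?_ ?_ ?_ ?_ ?_ <;>
        simp only [qmul0, qmul1, qmul2, qmul3, qmul4, qmul5, qmul6, qmul7, addc] <;> ring
    right_distrib := fun x y z => by
      show qmul (x + y) z = qmul x z + qmul y z
      refine eqOf _ _ ?_ ?_ ?_ ?_ ?_ ?_ ?_ ?_ <;>
        simp only [qmul0, qmul1, qmul2, qmul3, qmul4, qmul5, qmul6, qmul7, addc] <;> ring
    zero_mul := fun x => by
      show qmul 0 x = 0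
      refine eqOf _ _ ?_ ?_ ?_ ?_ ?_ ?_ ?_ ?_ <;>
        simp only [qmul0, qmul1, qmul2, qmul3, qmul4, qmul5, qmul6, qmul7, zeroc] <;> ring
    mul_zero := fun x => by
      show qmul x 0 = 0
      refine eqOf _ _ ?_ ?_ ?_ ?_ ?_ ?_ ?_ ?_ <;>
        simp only [qmul0, qmul1, qmul2, qmul3, qmul4, qmul5, qmul6, qmul7, zeroc] <;> ring }

instance instAlgebra : Algebra ℂ QA :=
  Algebra.ofModule
    (fun a x y => by
      show qmul (a • x) y = a • qmul x y
      refine eqOf _ _ ?_ ?_ ?_ ?_ ?_ ?_ ?_ ?_ <;>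
        simp only [qmul0, qmul1, qmul2, qmul3, qmul4, qmul5, qmul6, qmul7, smulc] <;> ring)
    (fun a x y => by
      show qmul x (a • y) = a • qmul x y
      refine eqOf _ _ ?_ ?_ ?_ ?_ ?_ ?_ ?_ ?_ <;>
        simp only [qmul0, qmul1, qmul2, qmul3, qmul4, qmul5, qmul6, qmul7, smulc] <;> ring)

lemma mul_def (x y : QA) : x * y = qmul x y := rfl
lemma one_def : (1 : QA) = qone := rfl

lemma decomp (x : QA) :
    x 0 • bv 0 + x 1 • bv 1 + x 2 • bv 2 + x 3 • bv 3 + x 4 • bv 4 + x 5 • bv 5 +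
      x 6 • bv 6 + x 7 • bv 7 = x := by
  refine eqOf _ _ ?_ ?_ ?_ ?_ ?_ ?_ ?_ ?_ <;> simp [addc, smulc, bv]

end QA

/-! ### The quotient side -/

namespace QE
open QA

def mk' : FreeAlgebra ℂ (Fin 6) →ₐ[ℂ] RingQuot quiverRel := RingQuot.mkAlgHom ℂ quiverRel

def eE1 : RingQuot quiverRel := mk' (gen 0)
def eE2 : RingQuot quiverRel := mk' (gen 1)
def aE1 : RingQuot quiverRel := mk' (gen 2)
def aE2 : RingQuot quiverRel := mk' (gen 3)
def bE1 : RingQuot quiverRel := mk' (gen 4)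
def bE2 : RingQuot quiverRel := mk' (gen 5)
def cE1 : RingQuot quiverRel := bE1 * aE1
def cE2 : RingQuot quiverRel := aE1 * bE1

-- base relations
lemma hunit : eE1 + eE2 = 1 := by
  have h := RingQuot.mkAlgHom_rel ℂ quiverRel.unit
  simp only [map_add, map_one] at h
  exact h
lemma he11 : eE1 * eE1 = eE1 := by
  have h := RingQuot.mkAlgHom_rel ℂ quiverRel.idem1
  simp only [map_mul] at h
  exact h
lemma he22 : eE2 * eE2 = eE2 := by
  have h := RingQuot.mkAlgHom_rel ℂ quiverRel.idem2
  simp only [map_mul] at h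
  exact h
lemma he12 : eE1 * eE2 = 0 := by
  have h := RingQuot.mkAlgHom_rel ℂ quiverRel.orth1
  simp only [map_mul, map_zero] at h
  exact h
lemma he21 : eE2 * eE1 = 0 := by
  have h := RingQuot.mkAlgHom_rel ℂ quiverRel.orth2
  simp only [map_mul, map_zero] at h
  exact h
lemma h2a1 : eE2 * aE1 = aE1 := by
  have h := RingQuot.mkAlgHom_rel ℂ quiverRel.pathA1l
  simp only [map_mul] at h
  exact h
lemma ha1e : aE1 * eE1 = aE1 := by
  have h := RingQuot.mkAlgHom_rel ℂ quiverRel.pathA1r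
  simp only [map_mul] at h
  exact h
lemma h2a2 : eE2 * aE2 = aE2 := by
  have h := RingQuot.mkAlgHom_rel ℂ quiverRel.pathA2l
  simp only [map_mul] at h
  exact h
lemma ha2e : aE2 * eE1 = aE2 := by
  have h := RingQuot.mkAlgHom_rel ℂ quiverRel.pathA2r
  simp only [map_mul] at h
  exact h
lemma h1b1 : eE1 * bE1 = bE1 := by
  have h := RingQuot.mkAlgHom_rel ℂ quiverRel.pathB1l
  simp only [map_mul] at h
  exact h
lemma hb1e : bE1 * eE2 = bE1 := by
  have h := RingQuot.mkAlgHom_rel ℂ quiverRel.pathB1r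
  simp only [map_mul] at h
  exact h
lemma h1b2 : eE1 * bE2 = bE2 := by
  have h := RingQuot.mkAlgHom_rel ℂ quiverRel.pathB2l
  simp only [map_mul] at h
  exact h
lemma hb2e : bE2 * eE2 = bE2 := by
  have h := RingQuot.mkAlgHom_rel ℂ quiverRel.pathB2r
  simp only [map_mul] at h
  exact h
lemma hab12 : aE1 * bE2 = 0 := by
  have h := RingQuot.mkAlgHom_rel ℂ quiverRel.ab12
  simp only [map_mul, map_zero] at h
  exact h
lemma hab21 : aE2 * bE1 = 0 := by
  have h := RingQuot.mkAlgHom_rel ℂ quiverRel.ab21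
  simp only [map_mul, map_zero] at h
  exact h
lemma hba12 : bE1 * aE2 = 0 := by
  have h := RingQuot.mkAlgHom_rel ℂ quiverRel.ba12
  simp only [map_mul, map_zero] at h
  exact h
lemma hba21 : bE2 * aE1 = 0 := by
  have h := RingQuot.mkAlgHom_rel ℂ quiverRel.ba21
  simp only [map_mul, map_zero] at h
  exact h
lemma habEq : aE1 * bE1 = aE2 * bE2 := by
  have h := RingQuot.mkAlgHom_rel ℂ quiverRel.abEq
  simp only [map_mul] at h
  exact h
lemma hbaEq : bE1 * aE1 = bE2 * aE2 := by
  have h := RingQuot.mkAlgHom_rel ℂ quiverRel.baEq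
  simp only [map_mul] at h
  exact h

-- helper
lemma aux_mid {x y u : RingQuot quiverRel} (h1 : x * u = 0) (h2 : u * y = y) : x * y = 0 := by
  rw [← h2, ← mul_assoc, h1, zero_mul]

-- derived products
lemma h1a1 : eE1 * aE1 = 0 := by rw [← h2a1, ← mul_assoc, he12, zero_mul]
lemma h1a2 : eE1 * aE2 = 0 := by rw [← h2a2, ← mul_assoc, he12, zero_mul]
lemma ha1e2 : aE1 * eE2 = 0 := by conv_lhs => rw [← ha1e]
                                  rw [mul_assoc, he12, mul_zero]
lemma ha2e2 : aE2 * eE2 = 0 := by conv_lhs => rw [← ha2e]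
                                  rw [mul_assoc, he12, mul_zero]
lemma h2b1 : eE2 * bE1 = 0 := by rw [← h1b1, ← mul_assoc, he21, zero_mul]
lemma h2b2 : eE2 * bE2 = 0 := by rw [← h1b2, ← mul_assoc, he21, zero_mul]
lemma hb1e1 : bE1 * eE1 = 0 := by conv_lhs => rw [← hb1e]
                                  rw [mul_assoc, he21, mul_zero]
lemma hb2e1 : bE2 * eE1 = 0 := by conv_lhs => rw [← hb2e]
                                  rw [mul_assoc, he21, mul_zero]
lemma haa11 : aE1 * aE1 = 0 := aux_mid ha1e2 h2a1
lemma haa12 : aE1 * aE2 = 0 := aux_mid ha1e2 h2a2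
lemma haa21 : aE2 * aE1 = 0 := aux_mid ha2e2 h2a1
lemma haa22 : aE2 * aE2 = 0 := aux_mid ha2e2 h2a2
lemma hbb11 : bE1 * bE1 = 0 := aux_mid hb1e1 h1b1
lemma hbb12 : bE1 * bE2 = 0 := aux_mid hb1e1 h1b2
lemma hbb21 : bE2 * bE1 = 0 := aux_mid hb2e1 h1b1
lemma hbb22 : bE2 * bE2 = 0 := aux_mid hb2e1 h1b2

lemma h1c1 : eE1 * cE1 = cE1 := by rw [cE1, ← mul_assoc, h1b1]
lemma hc1e1 : cE1 * eE1 = cE1 := by rw [cE1, mul_assoc, ha1e]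
lemma h2c1 : eE2 * cE1 = 0 := by rw [cE1, ← mul_assoc, h2b1, zero_mul]
lemma hc1e2 : cE1 * eE2 = 0 := by rw [cE1, mul_assoc, ha1e2, mul_zero]
lemma h2c2 : eE2 * cE2 = cE2 := by rw [cE2, ← mul_assoc, h2a1]
lemma hc2e2 : cE2 * eE2 = cE2 := by rw [cE2, mul_assoc, hb1e]
lemma h1c2 : eE1 * cE2 = 0 := by rw [cE2, ← mul_assoc, h1a1, zero_mul]
lemma hc2e1 : cE2 * eE1 = 0 := by rw [cE2, mul_assoc, hb1e1, mul_zero]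

lemma ha1c1 : aE1 * cE1 = 0 := by rw [cE1, ← mul_assoc, habEq, mul_assoc, hba21, mul_zero]
lemma ha2c1 : aE2 * cE1 = 0 := by rw [cE1, ← mul_assoc, hab21, zero_mul]
lemma hc1b1 : cE1 * bE1 = 0 := by rw [cE1, mul_assoc, habEq, ← mul_assoc, hba12, zero_mul]
lemma hc1b2 : cE1 * bE2 = 0 := by rw [cE1, mul_assoc, hab12, mul_zero]
lemma hc2a1 : cE2 * aE1 = 0 := by rw [cE2, mul_assoc, ← cE1, ha1c1]
lemma hc2a2 : cE2 * aE2 = 0 := by rw [cE2, mul_assoc, hba12, mul_zero]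
lemma hb1c2 : bE1 * cE2 = 0 := by rw [cE2, ← mul_assoc, ← cE1, hc1b1]
lemma hb2c2 : bE2 * cE2 = 0 := by rw [cE2, ← mul_assoc, hba21, zero_mul]
lemma hc1a1 : cE1 * aE1 = 0 := by rw [cE1, mul_assoc, haa11, mul_zero]
lemma hc1a2 : cE1 * aE2 = 0 := by rw [cE1, mul_assoc, haa12, mul_zero]
lemma hb1c1 : bE1 * cE1 = 0 := by rw [cE1, ← mul_assoc, hbb11, zero_mul]
lemma hb2c1 : bE2 * cE1 = 0 := by rw [cE1, ← mul_assoc, hbb21, zero_mul]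
lemma ha1c2 : aE1 * cE2 = 0 := by rw [cE2, ← mul_assoc, haa11, zero_mul]
lemma ha2c2 : aE2 * cE2 = 0 := by rw [cE2, ← mul_assoc, haa21, zero_mul]
lemma hc2b1 : cE2 * bE1 = 0 := by rw [cE2, mul_assoc, hbb11, mul_zero]
lemma hc2b2 : cE2 * bE2 = 0 := by rw [cE2, mul_assoc, hbb12, mul_zero]
lemma hc1c1 : cE1 * cE1 = 0 := by nth_rewrite 2 [cE1]
                                  rw [← mul_assoc, hc1b1, zero_mul]
lemma hc1c2 : cE1 * cE2 = 0 := by rw [cE2, ← mul_assoc, hc1a1, zero_mul]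
lemma hc2c1 : cE2 * cE1 = 0 := by rw [cE1, ← mul_assoc, hc2b1, zero_mul]
lemma hc2c2 : cE2 * cE2 = 0 := by nth_rewrite 2 [cE2]
                                  rw [← mul_assoc, hc2a1, zero_mul]
lemma hab11 : aE1 * bE1 = cE2 := rfl
lemma hba11 : bE1 * aE1 = cE1 := rfl
lemma hab22 : aE2 * bE2 = cE2 := habEq.symm
lemma hba22 : bE2 * aE2 = cE1 := hbaEq.symm

def T : Set (RingQuot quiverRel) := {eE1, eE2, aE1, aE2, bE1, bE2, cE1, cE2}
def S : Submodule ℂ (RingQuot quiverRel) := Submodule.span ℂ T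

lemma base_mul : ∀ u ∈ T, ∀ v ∈ T, u * v ∈ S := by
  intro u hu v hv
  simp only [T, Set.mem_insert_iff, Set.mem_singleton_iff] at hu hv
  rcases hu with rfl|rfl|rfl|rfl|rfl|rfl|rfl|rfl <;>
    rcases hv with rfl|rfl|rfl|rfl|rfl|rfl|rfl|rfl <;>
    simp only [he11, he22, he12, he21, h2a1, ha1e, h2a2, ha2e, h1b1, hb1e, h1b2, hb2e,
      hab12, hab21, hba12, hba21, h1a1, h1a2, ha1e2, ha2e2, h2b1, h2b2, hb1e1, hb2e1,
      haa11, haa12, haa21, haa22, hbb11, hbb12, hbb21, hbb22,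
      h1c1, hc1e1, h2c1, hc1e2, h2c2, hc2e2, h1c2, hc2e1,
      ha1c1, ha2c1, hc1b1, hc1b2, hc2a1, hc2a2, hb1c2, hb2c2,
      hc1a1, hc1a2, hb1c1, hb2c1, ha1c2, ha2c2, hc2b1, hc2b2,
      hc1c1, hc1c2, hc2c1, hc2c2, hab11, hba11, hab22, hba22] <;>
    first
      | exact zero_mem _
      | exact Submodule.subset_span (by simp [T])

lemma mulS : ∀ u ∈ S, ∀ v ∈ S, u * v ∈ S := by
  intro u hu v hv
  induction hv using Submodule.span_induction with
  | mem x hx =>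
    induction hu using Submodule.span_induction with
    | mem y hy => exact base_mul y hy x hx
    | zero => rw [zero_mul]; exact zero_mem _
    | add a b _ _ ha hb => rw [add_mul]; exact add_mem ha hb
    | smul r a _ ha => rw [smul_mul_assoc]; exact Submodule.smul_mem _ _ ha
  | zero => rw [mul_zero]; exact zero_mem _
  | add a b _ _ ha hb => rw [mul_add]; exact add_mem ha hb
  | smul r a _ ha => rw [mul_smul_comm]; exact Submodule.smul_mem _ _ ha

lemma span_top : S = ⊤ := by
  rw [eq_top_iff]
  rintro x -
  obtain ⟨y, rfl⟩ := RingQuot.mkAlgHom_surjective ℂ quiverRel x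
  induction y using FreeAlgebra.induction with
  | grade0 c =>
    rw [show (RingQuot.mkAlgHom ℂ quiverRel) (algebraMap ℂ _ c)
        = algebraMap ℂ (RingQuot quiverRel) c from AlgHom.commutes _ c,
      Algebra.algebraMap_eq_smul_one, ← hunit]
    exact Submodule.smul_mem _ _ (add_mem (Submodule.subset_span (by simp [T]))
      (Submodule.subset_span (by simp [T])))
  | grade1 i =>
    fin_cases i
    · exact Submodule.subset_span (by simp [T, eE1, gen, mk'])
    · exact Submodule.subset_span (by simp [T, eE2, gen, mk'])
    · exact Submodule.subset_span (by simp [T, aE1, gen, mk'])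
    · exact Submodule.subset_span (by simp [T, aE2, gen, mk'])
    · exact Submodule.subset_span (by simp [T, bE1, gen, mk'])
    · exact Submodule.subset_span (by simp [T, bE2, gen, mk'])
  | mul x y hx hy => rw [map_mul]; exact mulS _ hx _ hy
  | add x y hx hy => rw [map_add]; exact add_mem hx hy

instance instFD : FiniteDimensional ℂ (RingQuot quiverRel) :=
  Module.finite_def.mpr (span_top ▸ Submodule.fg_span
    (by unfold T
        exact (((((((Set.finite_singleton _).insert _).insert _).insert _).insert _).insert
          _).insert _).insert _))

/-! ### The comparison map to the explicit model -/

def φmap (i : Fin 6) : QA := bv (Fin.castLE (by norm_num) i)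

def φ : FreeAlgebra ℂ (Fin 6) →ₐ[ℂ] QA := FreeAlgebra.lift ℂ φmap

lemma φm0 : φmap 0 = bv 0 := rfl
lemma φm1 : φmap 1 = bv 1 := rfl
lemma φm2 : φmap 2 = bv 2 := rfl
lemma φm3 : φmap 3 = bv 3 := rfl
lemma φm4 : φmap 4 = bv 4 := rfl
lemma φm5 : φmap 5 = bv 5 := rfl

lemma φrel : ∀ ⦃x y : FreeAlgebra ℂ (Fin 6)⦄, quiverRel x y → φ x = φ y := by
  intro x y h
  induction h <;>
    simp only [gen, φ, map_mul, map_add, map_one, map_zero, FreeAlgebra.lift_ι_apply,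
      φm0, φm1, φm2, φm3, φm4, φm5] <;>
    refine QA.eqOf _ _ ?_ ?_ ?_ ?_ ?_ ?_ ?_ ?_ <;>
    simp [QA.mul_def, qmul0, qmul1, qmul2, qmul3, qmul4, qmul5, qmul6, qmul7,
      QA.addc, QA.zeroc, QA.one_def, onec0, onec1, onec2, onec3, onec4, onec5, onec6, onec7, bv]

def F : RingQuot quiverRel →ₐ[ℂ] QA := RingQuot.liftAlgHom ℂ ⟨φ, φrel⟩

lemma Fmk (x : FreeAlgebra ℂ (Fin 6)) : F (mk' x) = φ x := by
  rw [mk', F, RingQuot.liftAlgHom_mkAlgHom_apply]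

lemma Fe1 : F eE1 = bv 0 := by rw [eE1, Fmk]; simp [gen, φ, FreeAlgebra.lift_ι_apply, φm0]
lemma Fe2 : F eE2 = bv 1 := by rw [eE2, Fmk]; simp [gen, φ, FreeAlgebra.lift_ι_apply, φm1]
lemma Fa1 : F aE1 = bv 2 := by rw [aE1, Fmk]; simp [gen, φ, FreeAlgebra.lift_ι_apply, φm2]
lemma Fa2 : F aE2 = bv 3 := by rw [aE2, Fmk]; simp [gen, φ, FreeAlgebra.lift_ι_apply, φm3]
lemma Fb1 : F bE1 = bv 4 := by rw [bE1, Fmk]; simp [gen, φ, FreeAlgebra.lift_ι_apply, φm4]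
lemma Fb2 : F bE2 = bv 5 := by rw [bE2, Fmk]; simp [gen, φ, FreeAlgebra.lift_ι_apply, φm5]
lemma Fc1 : F cE1 = bv 6 := by
  rw [cE1, map_mul, Fb1, Fa1]
  refine QA.eqOf _ _ ?_ ?_ ?_ ?_ ?_ ?_ ?_ ?_ <;>
    simp [QA.mul_def, qmul0, qmul1, qmul2, qmul3, qmul4, qmul5, qmul6, qmul7, bv]
lemma Fc2 : F cE2 = bv 7 := by
  rw [cE2, map_mul, Fa1, Fb1]
  refine QA.eqOf _ _ ?_ ?_ ?_ ?_ ?_ ?_ ?_ ?_ <;>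
    simp [QA.mul_def, qmul0, qmul1, qmul2, qmul3, qmul4, qmul5, qmul6, qmul7, bv]

lemma hFtop : LinearMap.range F.toLinearMap = ⊤ := by
  rw [eq_top_iff]
  rintro x -
  refine ⟨x 0 • eE1 + x 1 • eE2 + x 2 • aE1 + x 3 • aE2 + x 4 • bE1 + x 5 • bE2 +
    x 6 • cE1 + x 7 • cE2, ?_⟩
  simp only [AlgHom.toLinearMap_apply, map_add, map_smul, Fe1, Fe2, Fa1, Fa2, Fb1, Fb2, Fc1, Fc2]
  exact QA.decomp x

/-! ### Rank of corners -/

lemma finrank_span_bv_pair {p q : Fin 8} (h : p ≠ q) :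
    Module.finrank ℂ (Submodule.span ℂ ({bv p, bv q} : Set QA)) = 2 := by
  have li : LinearIndependent ℂ ![bv p, bv q] := by
    rw [linearIndependent_fin2]
    constructor
    · intro h0
      have h1 : bv q q = (0 : QA) q := by
        have := congrFun (by simpa using h0 : bv q = (0 : QA)) q
        exact this
      simp [bv, QA.zeroc] at h1
    · intro a ha
      have h1 : (a • bv q) p = bv p p := by
        have := congrFun (by simpa using ha : a • bv q = bv p) p
        exact this
      simp [bv, QA.smulc, h] at h1
  have hr : Set.range ![bv p, bv q] = {bv p, bv q} := by
    ext z
    simp only [Set.mem_range, Fin.exists_fin_two, Matrix.cons_val_zero, Matrix.cons_val_one,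
      Matrix.head_cons, Set.mem_insert_iff, Set.mem_singleton_iff]
    tauto
  rw [show ({bv p, bv q} : Set QA) = Set.range ![bv p, bv q] from hr.symm,
    finrank_span_eq_card li, Fintype.card_fin]

lemma corner_rank (u v : RingQuot quiverRel) (p q : Fin 8) (hpq : p ≠ q)
    (x y : RingQuot quiverRel)
    (hT : ∀ t ∈ T, u * (t * v) = 0 ∨ u * (t * v) = x ∨ u * (t * v) = y)
    (hg' : ∀ z : QA, F u * (z * F v) = z p • bv p + z q • bv q) :
    Module.finrank ℂ
      (LinearMap.range (LinearMap.mulLeft ℂ u ∘ₗ LinearMap.mulRight ℂ v)) = 2 := by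
  set g : RingQuot quiverRel →ₗ[ℂ] RingQuot quiverRel :=
    LinearMap.mulLeft ℂ u ∘ₗ LinearMap.mulRight ℂ v with hg
  set g' : QA →ₗ[ℂ] QA := LinearMap.mulLeft ℂ (F u) ∘ₗ LinearMap.mulRight ℂ (F v) with hg'def
  have happly : ∀ z, g z = u * (z * v) := fun z => by
    simp [hg, LinearMap.mulLeft_apply, LinearMap.mulRight_apply]
  have happly' : ∀ z, g' z = F u * (z * F v) := fun z => by
    simp [hg'def, LinearMap.mulLeft_apply, LinearMap.mulRight_apply]
  have hcomm : F.toLinearMap ∘ₗ g = g' ∘ₗ F.toLinearMap := by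
    ext z
    simp only [LinearMap.comp_apply, AlgHom.toLinearMap_apply, happly, happly', map_mul]
  have hrange' : LinearMap.range g' = Submodule.span ℂ ({bv p, bv q} : Set QA) := by
    apply le_antisymm
    · rintro _ ⟨z, rfl⟩
      rw [happly', hg' z]
      exact add_mem (Submodule.smul_mem _ _ (Submodule.subset_span (by simp)))
        (Submodule.smul_mem _ _ (Submodule.subset_span (by simp)))
    · rw [Submodule.span_le]
      intro w hw
      simp only [Set.mem_insert_iff, Set.mem_singleton_iff] at hw
      rcases hw with rfl | rfl
      · exact ⟨bv p, by rw [happly', hg' (bv p)]; simp [bv, hpq, hpq.symm]⟩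
      · exact ⟨bv q, by rw [happly', hg' (bv q)]; simp [bv, hpq, hpq.symm]⟩
  have hfr' : Module.finrank ℂ (LinearMap.range g') = 2 := by
    rw [hrange']; exact finrank_span_bv_pair hpq
  have hle : LinearMap.range g ≤ Submodule.span ℂ ({x, y} : Set (RingQuot quiverRel)) := by
    rintro _ ⟨w, rfl⟩
    have hw : w ∈ S := by rw [span_top]; trivial
    induction hw using Submodule.span_induction with
    | mem t ht =>
      rcases hT t ht with h | h | h
      · rw [happly, h]; exact zero_mem _
      · rw [happly, h]; exact Submodule.subset_span (by simp)
      · rw [happly, h]; exact Submodule.subset_span (by simp)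
    | zero => rw [map_zero]; exact zero_mem _
    | add a b _ _ ha hb => rw [map_add]; exact add_mem ha hb
    | smul r a _ ha => rw [map_smul]; exact Submodule.smul_mem _ _ ha
  have hub : Module.finrank ℂ (LinearMap.range g) ≤ 2 := by
    have hxy : ({x, y} : Set (RingQuot quiverRel)) = Set.range ![x, y] := by
      ext z
      simp only [Set.mem_range, Fin.exists_fin_two, Matrix.cons_val_zero, Matrix.cons_val_one,
        Matrix.head_cons, Set.mem_insert_iff, Set.mem_singleton_iff]
      tauto
    have h1 : Module.finrank ℂ (Submodule.span ℂ ({x, y} : Set (RingQuot quiverRel))) ≤ 2 := by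
      rw [hxy]
      simpa [Set.finrank] using finrank_range_le_card (R := ℂ) ![x, y]
    exact le_trans (Submodule.finrank_mono hle) h1
  have hlb : 2 ≤ Module.finrank ℂ (LinearMap.range g) := by
    have hmap : Submodule.map F.toLinearMap (LinearMap.range g) = LinearMap.range g' := by
      rw [← LinearMap.range_comp, hcomm, LinearMap.range_comp, hFtop, Submodule.map_top]
    calc 2 = Module.finrank ℂ (LinearMap.range g') := hfr'.symm
      _ = Module.finrank ℂ (Submodule.map F.toLinearMap (LinearMap.range g)) := by rw [hmap]
      _ ≤ Module.finrank ℂ (LinearMap.range g) := Submodule.finrank_map_le _ _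
  omega

-- the four corner computations in the explicit model
lemma qa00 (z : QA) : bv 0 * (z * bv 0) = z 0 • bv 0 + z 6 • bv 6 := by
  refine QA.eqOf _ _ ?_ ?_ ?_ ?_ ?_ ?_ ?_ ?_ <;>
    simp [QA.mul_def, qmul0, qmul1, qmul2, qmul3, qmul4, qmul5, qmul6, qmul7,
      QA.addc, QA.smulc, bv]
lemma qa11 (z : QA) : bv 1 * (z * bv 1) = z 1 • bv 1 + z 7 • bv 7 := by
  refine QA.eqOf _ _ ?_ ?_ ?_ ?_ ?_ ?_ ?_ ?_ <;>
    simp [QA.mul_def, qmul0, qmul1, qmul2, qmul3, qmul4, qmul5, qmul6, qmul7,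
      QA.addc, QA.smulc, bv]
lemma qa10 (z : QA) : bv 1 * (z * bv 0) = z 2 • bv 2 + z 3 • bv 3 := by
  refine QA.eqOf _ _ ?_ ?_ ?_ ?_ ?_ ?_ ?_ ?_ <;>
    simp [QA.mul_def, qmul0, qmul1, qmul2, qmul3, qmul4, qmul5, qmul6, qmul7,
      QA.addc, QA.smulc, bv]
lemma qa01 (z : QA) : bv 0 * (z * bv 1) = z 4 • bv 4 + z 5 • bv 5 := by
  refine QA.eqOf _ _ ?_ ?_ ?_ ?_ ?_ ?_ ?_ ?_ <;>
    simp [QA.mul_def, qmul0, qmul1, qmul2, qmul3, qmul4, qmul5, qmul6, qmul7,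
      QA.addc, QA.smulc, bv]

lemma hTmem : ∀ t ∈ T, t = eE1 ∨ t = eE2 ∨ t = aE1 ∨ t = aE2 ∨ t = bE1 ∨ t = bE2 ∨
    t = cE1 ∨ t = cE2 := by
  intro t ht
  simpa only [T, Set.mem_insert_iff, Set.mem_singleton_iff] using ht

lemma case00 :
    Module.finrank ℂ
      (LinearMap.range (LinearMap.mulLeft ℂ eE1 ∘ₗ LinearMap.mulRight ℂ eE1)) = 2 := by
  refine corner_rank eE1 eE1 0 6 (by decide) eE1 cE1 ?_ ?_
  · intro t ht
    rcases hTmem t ht with rfl|rfl|rfl|rfl|rfl|rfl|rfl|rfl <;>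
      simp only [he11, he12, he21, ha1e, ha2e, hb1e1, hb2e1, hc1e1, hc2e1, h1a1, h1a2,
        h1b1, h1b2, h1c1, h1c2, mul_zero, zero_mul] <;> tauto
  · intro z; rw [Fe1]; exact qa00 z

lemma case11 :
    Module.finrank ℂ
      (LinearMap.range (LinearMap.mulLeft ℂ eE2 ∘ₗ LinearMap.mulRight ℂ eE2)) = 2 := by
  refine corner_rank eE2 eE2 1 7 (by decide) eE2 cE2 ?_ ?_
  · intro t ht
    rcases hTmem t ht with rfl|rfl|rfl|rfl|rfl|rfl|rfl|rfl <;>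
      simp only [he22, he12, he21, ha1e2, ha2e2, hb1e, hb2e, hc1e2, hc2e2, h2a1, h2a2,
        h2b1, h2b2, h2c1, h2c2, mul_zero, zero_mul] <;> tauto
  · intro z; rw [Fe2]; exact qa11 z

lemma case10 :
    Module.finrank ℂ
      (LinearMap.range (LinearMap.mulLeft ℂ eE2 ∘ₗ LinearMap.mulRight ℂ eE1)) = 2 := by
  refine corner_rank eE2 eE1 2 3 (by decide) aE1 aE2 ?_ ?_
  · intro t ht
    rcases hTmem t ht with rfl|rfl|rfl|rfl|rfl|rfl|rfl|rfl <;>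
      simp only [he11, he21, ha1e, ha2e, hb1e1, hb2e1, hc1e1, hc2e1, h2a1, h2a2,
        h2b1, h2b2, h2c1, h2c2, he22, mul_zero, zero_mul] <;> tauto
  · intro z; rw [Fe1, Fe2]; exact qa10 z

lemma case01 :
    Module.finrank ℂ
      (LinearMap.range (LinearMap.mulLeft ℂ eE1 ∘ₗ LinearMap.mulRight ℂ eE2)) = 2 := by
  refine corner_rank eE1 eE2 4 5 (by decide) bE1 bE2 ?_ ?_
  · intro t ht
    rcases hTmem t ht with rfl|rfl|rfl|rfl|rfl|rfl|rfl|rfl <;>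
      simp only [he12, he22, ha1e2, ha2e2, hb1e, hb2e, hc1e2, hc2e2, h1a1, h1a2,
        h1b1, h1b2, h1c1, h1c2, he11, mul_zero, zero_mul] <;> tauto
  · intro z; rw [Fe1, Fe2]; exact qa01 z

/-! ### Rank of the Cartan matrix -/

lemma cartan_rank : Matrix.rank (!![(2 : ℂ), 2; 2, 2]) = 1 := by
  have hval : ∀ w : Fin 2 → ℂ,
      (!![(2 : ℂ), 2; 2, 2]).mulVecLin w = (2 * (w 0 + w 1)) • ![(1 : ℂ), 1] := by
    intro w
    funext i
    fin_cases i <;>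
      simp [Matrix.mulVecLin_apply, Matrix.mulVec, dotProduct, Fin.sum_univ_two] <;>
      ring
  have hne : (![(1 : ℂ), 1]) ≠ 0 := by
    intro h
    have := congrFun h 0
    simp at this
  have hr : LinearMap.range (!![(2 : ℂ), 2; 2, 2]).mulVecLin
      = Submodule.span ℂ {![(1 : ℂ), 1]} := by
    apply le_antisymm
    · rintro _ ⟨w, rfl⟩
      rw [hval w]
      exact Submodule.smul_mem _ _ (Submodule.subset_span rfl)
    · rw [Submodule.span_le]
      intro z hz
      rw [Set.mem_singleton_iff] at hz
      subst hz
      refine ⟨![(1 : ℂ)/2, 0], ?_⟩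
      rw [hval]
      norm_num
  rw [Matrix.rank, hr, finrank_span_singleton hne]

end QE

end StatementFourteen

/-- the quiver algebra `E` (two vertices, arrows `a₁ a₂ : 1 → 2`,
`b₁ b₂ : 2 → 1`, relations `aᵢbⱼ = 0 = bⱼaᵢ` for `i ≠ j`, `a₁b₁ = a₂b₂`, `b₁a₁ = b₂a₂`)
is a finite-dimensional `ℂ`-algebra whose Cartan matrix `[[2,2],[2,2]]` has rank one;
consequently the projective (Higman) center of `E` has dimension `1 = rank` of the
Cartan matrix. -/
theorem stmt_14 :
    FiniteDimensional ℂ quiverAlgE ∧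
    -- the Cartan matrix of `E`: its `(i,j)` entry `[Pᵢ : Lⱼ] = dim_ℂ eⱼ E eᵢ` equals 2
    (∀ i j : Fin 2,
      Module.finrank ℂ
        (LinearMap.range
          ((LinearMap.mulLeft ℂ
              ((RingQuot.mkAlgHom ℂ quiverRel) (gen (j.castLE (by omega))))) ∘ₗ
            (LinearMap.mulRight ℂ
              ((RingQuot.mkAlgHom ℂ quiverRel) (gen (i.castLE (by omega))))))) = 2) ∧
    Matrix.rank (!![(2 : ℂ), 2; 2, 2]) = 1 := by
  refine ⟨?_, ?_, QE.cartan_rank⟩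
  · exact inferInstanceAs (FiniteDimensional ℂ (RingQuot quiverRel))
  · intro i j
    fin_cases i <;> fin_cases j
    · exact QE.case00
    · exact QE.case10
    · exact QE.case01
    · exact QE.case11
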